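/- arXiv:1003.1160 — 5 statements merged into one kernel-verified Lean document; each statement's English description precedes it below -/
import Mathlib

section
/- The trace simulation relation ⋉ is transitive: for all traces α, β, γ, if α ⋉ β and β ⋉ γ then α ⋉ γ. (This uses the transitivity of the entailment relation ⊨_c on guard conditions.) -/
set_option maxRecDepth 10000


/- Tokens, traces, the unwrap rewriting relation and the trace simulation
relation of "Required Behavior of Sequence Diagrams: Semantics and
Conformance" (Lu & Kim). -/

namespace SDPaper

/-- An atom is an event or a guard condition. -/
inductive Atom (E C : Type) : Type where
  | evt : E → Atom E C
  | cnd : C → Atom E C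

/-- A token is an event, a condition, or a critical segment wrapping a finite
sequence of events and conditions. -/
inductive Tok (E C : Type) : Type where
  | atom : Atom E C → Tok E C
  | crit : List (Atom E C) → Tok E C

/-- A trace is a finite sequence of tokens. -/
abbrev Trace (E C : Type) : Type := List (Tok E C)

/-- The token carrying a guard condition. -/
def condTok {E C : Type} (c : C) : Tok E C := Tok.atom (Atom.cnd c)

/-- The token carrying an event. -/
def evtTok {E C : Type} (e : E) : Tok E C := Tok.atom (Atom.evt e)

/-- The unwrap rewriting relation `↷` on traces: one step exposes one critical
segment, `α⟨σ⟩β ↷ ασβ`. -/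
inductive Unwrap {E C : Type} : Trace E C → Trace E C → Prop where
  | step (α β : Trace E C) (σ : List (Atom E C)) :
      Unwrap (α ++ Tok.crit σ :: β) (α ++ σ.map Tok.atom ++ β)

/-- The reflexive–transitive closure `↷*` of the unwrap relation. -/
def Unwraps {E C : Type} : Trace E C → Trace E C → Prop :=
  Relation.ReflTransGen Unwrap

section Sim

variable {E C : Type} (ent : C → C → Prop)

/-- Simulation on atoms: `c₁ ⋉ c₂` if `c₂ ⊨_c c₁`; `e₁ ⋉ e₂` if `e₁ = e₂`.
Here `ent c₁ c₂` denotes the entailment `c₁ ⊨_c c₂`. -/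
inductive AtomSim : Atom E C → Atom E C → Prop where
  | evt (e : E) : AtomSim (Atom.evt e) (Atom.evt e)
  | cnd {c₁ c₂ : C} : ent c₂ c₁ → AtomSim (Atom.cnd c₁) (Atom.cnd c₂)

/-- Simulation on sequences of events and conditions (used inside critical
segments, which contain no nested critical segments): there is a strictly
increasing reindexing function `η` such that corresponding atoms are similar
and every position outside the image of `η` carries a condition. -/
def SeqSim (α γ : List (Atom E C)) : Prop :=
  ∃ η : Fin α.length → Fin γ.length, StrictMono η ∧
    (∀ i : Fin α.length, AtomSim ent (α.get i) (γ.get (η i))) ∧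
    (∀ j : Fin γ.length, (∀ i, η i ≠ j) → ∃ c : C, γ.get j = Atom.cnd c)

/-- Simulation on tokens: a critical segment can only be simulated by a
critical segment, `⟨α⟩ ⋉ ⟨γ⟩` if `α ⋉ γ`. -/
inductive TokSim : Tok E C → Tok E C → Prop where
  | atom {a b : Atom E C} : AtomSim ent a b → TokSim (Tok.atom a) (Tok.atom b)
  | crit {α γ : List (Atom E C)} : SeqSim ent α γ → TokSim (Tok.crit α) (Tok.crit γ)

/-- The trace simulation relation `α ⋉ γ`: there are a trace `β` with
`α ↷* β` and a strictly increasing `η : dom(β) → dom(γ)` such that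
`β(i) ⋉ γ(η(i))` for every `i` and every position of `γ` outside the image of
`η` carries a condition. -/
def TraceSim (α γ : Trace E C) : Prop :=
  ∃ β : Trace E C, Unwraps α β ∧
    ∃ η : Fin β.length → Fin γ.length, StrictMono η ∧
      (∀ i : Fin β.length, TokSim ent (β.get i) (γ.get (η i))) ∧
      (∀ j : Fin γ.length, (∀ i, η i ≠ j) → ∃ c : C, γ.get j = condTok c)

end Sim

end SDPaper

namespace SDPaper

/-! ### Auxiliary machinery: an inductive embedding relation -/

section EmbAux

variable {T : Type}

/-- Inductive characterization of "there is a strictly increasing reindexing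
function matching elements by `R`, with every unmatched position satisfying
`P`". -/
inductive Emb (R : T → T → Prop) (P : T → Prop) : List T → List T → Prop where
  | nil : Emb R P [] []
  | cons {a b : T} {l m : List T} : R a b → Emb R P l m → Emb R P (a :: l) (b :: m)
  | skip {b : T} {l m : List T} : P b → Emb R P l m → Emb R P l (b :: m)

variable {R : T → T → Prop} {P : T → Prop}

theorem emb_nil_of_all {m : List T} (h : ∀ x ∈ m, P x) : Emb R P [] m := by
  induction m with
  | nil => exact .nil
  | cons b m ih => exact .skip (h b (by simp)) (ih fun x hx => h x (by simp [hx]))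

theorem Emb.append {l₁ l₂ u v : List T} (h1 : Emb R P l₁ u) (h2 : Emb R P l₂ v) :
    Emb R P (l₁ ++ l₂) (u ++ v) := by
  induction h1 with
  | nil => simpa
  | cons r _ ih => exact .cons r ih
  | skip p _ ih => exact .skip p ih

theorem Emb.decomp {l u v : List T} (h : Emb R P l (u ++ v)) :
    ∃ l₁ l₂, l = l₁ ++ l₂ ∧ Emb R P l₁ u ∧ Emb R P l₂ v := by
  induction u generalizing l with
  | nil => exact ⟨[], l, rfl, .nil, h⟩
  | cons b u ih =>
    cases h with
    | cons r h' =>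
      obtain ⟨l₁, l₂, rfl, h1, h2⟩ := ih h'
      exact ⟨_ :: l₁, l₂, rfl, .cons r h1, h2⟩
    | skip p h' =>
      obtain ⟨l₁, l₂, rfl, h1, h2⟩ := ih h'
      exact ⟨l₁, l₂, rfl, .skip p h1, h2⟩

theorem Emb.trans' {R' R'' : T → T → Prop} {l m n : List T}
    (hRt : ∀ a b c, R a b → R' b c → R'' a c)
    (hP : ∀ b c, P b → R' b c → P c)
    (h1 : Emb R P l m) (h2 : Emb R' P m n) : Emb R'' P l n := by
  induction h2 generalizing l with
  | nil => cases h1; exact .nil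
  | cons r' _ ih =>
    cases h1 with
    | cons r h1' => exact .cons (hRt _ _ _ r r') (ih h1')
    | skip p h1' => exact .skip (hP _ _ p r') (ih h1')
  | skip p _ ih => exact .skip p (ih h1)

/-- From the inductive embedding to the reindexing-function form. -/
theorem Emb.toFun {l m : List T} (h : Emb R P l m) :
    ∃ η : Fin l.length → Fin m.length, StrictMono η ∧
      (∀ i, R (l.get i) (m.get (η i))) ∧
      (∀ j, (∀ i, η i ≠ j) → P (m.get j)) := by
  induction h with
  | nil =>
    exact ⟨Fin.elim0, fun i => i.elim0, fun i => i.elim0, fun j => j.elim0⟩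
  | @cons a b l m r h ih =>
    obtain ⟨η, hmono, hR, hP⟩ := ih
    refine ⟨Fin.cases ⟨0, Nat.succ_pos _⟩ (fun i => (η i).succ), ?_, ?_, ?_⟩
    · intro i j hij
      induction i using Fin.cases with
      | zero =>
        induction j using Fin.cases with
        | zero => exact absurd hij (lt_irrefl _)
        | succ j => simpa using (η j).succ_pos
      | succ i =>
        induction j using Fin.cases with
        | zero => exact absurd hij (by simp [Fin.lt_def])
        | succ j =>
          simp only [Fin.cases_succ]
          exact Fin.succ_lt_succ_iff.mpr (hmono (Fin.succ_lt_succ_iff.mp hij))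
    · intro i
      induction i using Fin.cases with
      | zero => simpa using r
      | succ i => simpa using hR i
    · intro j hj
      rcases j with ⟨jv, hjv⟩
      cases jv with
      | zero => exact absurd rfl (hj ⟨0, Nat.succ_pos _⟩)
      | succ jv =>
        have hjv' : jv < m.length := Nat.lt_of_succ_lt_succ hjv
        have hgap : ∀ i, η i ≠ ⟨jv, hjv'⟩ := by
          intro i hi
          refine hj i.succ (Fin.ext ?_)
          simp [hi]
        exact hP ⟨jv, hjv'⟩ hgap
  | @skip b l m p h ih =>
    obtain ⟨η, hmono, hR, hP⟩ := ih
    refine ⟨fun i => (η i).succ, ?_, ?_, ?_⟩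
    · intro i j hij
      exact Fin.succ_lt_succ_iff.mpr (hmono hij)
    · intro i
      simpa using hR i
    · intro j hj
      induction j using Fin.cases with
      | zero => simpa using p
      | succ j =>
        have : ∀ i, η i ≠ j := by
          intro i hi
          exact hj i (by simpa using congrArg Fin.succ hi)
        simpa using hP j this

theorem get_cons_pred {b : T} {m : List T} (k : Fin (b :: m).length)
    (h : k ≠ ⟨0, Nat.succ_pos _⟩) :
    m.get (k.pred h) = (b :: m).get k := by
  rcases k with ⟨v, hv⟩
  cases v with
  | zero => exact absurd rfl h
  | succ v => rfl

/-- From the reindexing-function form to the inductive embedding. -/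
theorem emb_of_fun {l m : List T}
    (η : Fin l.length → Fin m.length) (hmono : StrictMono η)
    (hR : ∀ i, R (l.get i) (m.get (η i)))
    (hP : ∀ j, (∀ i, η i ≠ j) → P (m.get j)) : Emb R P l m := by
  induction m generalizing l with
  | nil =>
    cases l with
    | nil => exact .nil
    | cons a l => exact (η ⟨0, by simp⟩).elim0
  | cons b m ih =>
    cases l with
    | nil =>
      refine emb_nil_of_all fun x hx => ?_
      obtain ⟨j, rfl⟩ := List.mem_iff_get.mp hx
      exact hP j (fun i => i.elim0)
    | cons a l =>
      set i0 : Fin (a :: l).length := ⟨0, Nat.succ_pos _⟩ with hi0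
      by_cases h0 : η i0 = ⟨0, Nat.succ_pos _⟩
      · -- the head is matched
        have hne : ∀ i : Fin l.length, η i.succ ≠ ⟨0, Nat.succ_pos _⟩ := by
          intro i hi
          have h5 : η i0 < η i.succ := hmono (by simp [hi0, Fin.lt_def])
          rw [h0, hi] at h5
          exact absurd h5 (lt_irrefl _)
        refine Emb.cons ?_ (ih (fun i => (η i.succ).pred (hne i)) ?_ ?_ ?_)
        · have := hR i0
          rw [h0] at this
          simpa [hi0] using this
        · intro i j hij
          have h1 : η i.succ < η j.succ := hmono (Fin.succ_lt_succ_iff.mpr hij)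
          have h2 := (hne i)
          simp only [Fin.lt_def, Fin.coe_pred]
          have h3 : (η i.succ).val ≠ 0 := fun h => h2 (Fin.ext h)
          have h4 : (η i.succ).val < (η j.succ).val := h1
          show (η i.succ).val - 1 < (η j.succ).val - 1
          omega
        · intro i
          rw [get_cons_pred]
          exact hR i.succ
        · intro j hj
          have : ∀ i : Fin (a :: l).length, η i ≠ j.succ := by
            intro i hi
            induction i using Fin.cases with
            | zero =>
              have h7 : η i0 = j.succ := hi
              rw [h0] at h7
              have h8 := congrArg Fin.val h7
              simp [Fin.val_succ] at h8
            | succ i =>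
              refine hj i ?_
              apply Fin.ext
              simp only [Fin.coe_pred, hi, Fin.val_succ]
              omega
          simpa using hP j.succ this
      · -- the head is skipped
        have hne : ∀ i : Fin (a :: l).length, η i ≠ ⟨0, Nat.succ_pos _⟩ := by
          intro i hi
          have h1 : η i0 ≤ η i := hmono.monotone (by simp [hi0, Fin.le_def])
          rw [hi] at h1
          refine h0 (Fin.ext ?_)
          have := (Fin.le_def).mp h1
          simpa using this
        refine Emb.skip ?_ (ih (fun i => (η i).pred (hne i)) ?_ ?_ ?_)
        · simpa using hP ⟨0, Nat.succ_pos _⟩ (fun i h => hne i h)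
        · intro i j hij
          have h1 : η i < η j := hmono hij
          have h3 : (η i).val ≠ 0 := fun h => (hne i) (Fin.ext h)
          simp only [Fin.lt_def, Fin.coe_pred]
          have h4 : (η i).val < (η j).val := h1
          show (η i).val - 1 < (η j).val - 1
          omega
        · intro i
          rw [get_cons_pred]
          exact hR i
        · intro j hj
          have : ∀ i, η i ≠ j.succ := by
            intro i hi
            refine hj i ?_
            apply Fin.ext
            simp only [Fin.coe_pred, hi, Fin.val_succ]
            omega
          simpa using hP j.succ this

end EmbAux

section SimAux

variable {E C : Type} {ent : C → C → Prop}

/-- "Is a condition token". -/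
def isCondTok {E C : Type} (t : Tok E C) : Prop := ∃ c : C, t = condTok c

/-- "Is a condition atom". -/
def isCndAtom {E C : Type} (a : Atom E C) : Prop := ∃ c : C, a = Atom.cnd c

theorem seqSim_iff_emb {α γ : List (Atom E C)} :
    SeqSim ent α γ ↔ Emb (AtomSim ent) isCndAtom α γ := by
  constructor
  · rintro ⟨η, hmono, hR, hP⟩
    exact emb_of_fun η hmono hR hP
  · intro h
    obtain ⟨η, hmono, hR, hP⟩ := h.toFun
    exact ⟨η, hmono, hR, hP⟩

theorem traceFun_iff_emb {α γ : Trace E C} :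
    (∃ η : Fin α.length → Fin γ.length, StrictMono η ∧
      (∀ i : Fin α.length, TokSim ent (α.get i) (γ.get (η i))) ∧
      (∀ j : Fin γ.length, (∀ i, η i ≠ j) → ∃ c : C, γ.get j = condTok c)) ↔
    Emb (TokSim ent) isCondTok α γ := by
  constructor
  · rintro ⟨η, hmono, hR, hP⟩
    exact emb_of_fun η hmono hR hP
  · intro h
    obtain ⟨η, hmono, hR, hP⟩ := h.toFun
    exact ⟨η, hmono, hR, hP⟩

theorem atomSim_trans (ent_trans : ∀ c₁ c₂ c₃ : C, ent c₁ c₂ → ent c₂ c₃ → ent c₁ c₃)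
    {a b c : Atom E C} (h1 : AtomSim ent a b) (h2 : AtomSim ent b c) :
    AtomSim ent a c := by
  cases h1 with
  | evt e => cases h2 with | evt => exact .evt e
  | cnd h1' => cases h2 with | cnd h2' => exact .cnd (ent_trans _ _ _ h2' h1')

theorem atomSim_cnd_right {c : C} {b : Atom E C}
    (h : AtomSim ent (Atom.cnd c) b) : isCndAtom b := by
  cases h with | cnd _ => exact ⟨_, rfl⟩

theorem tokSim_trans (ent_trans : ∀ c₁ c₂ c₃ : C, ent c₁ c₂ → ent c₂ c₃ → ent c₁ c₃)
    {a b c : Tok E C} (h1 : TokSim ent a b) (h2 : TokSim ent b c) :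
    TokSim ent a c := by
  cases h1 with
  | atom h1' =>
    cases h2 with
    | atom h2' => exact .atom (atomSim_trans ent_trans h1' h2')
  | crit h1' =>
    cases h2 with
    | crit h2' =>
      refine .crit (seqSim_iff_emb.mpr ?_)
      refine Emb.trans' ?_ ?_ (seqSim_iff_emb.mp h1') (seqSim_iff_emb.mp h2')
      · exact fun a b c r r' => atomSim_trans ent_trans r r'
      · intro b c hb r
        obtain ⟨cb, rfl⟩ := hb
        exact atomSim_cnd_right r

theorem tokSim_cond_right {c : C} {b : Tok E C}
    (h : TokSim ent (condTok c) b) : isCondTok b := by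
  cases h with
  | atom h' =>
    obtain ⟨c', rfl⟩ := atomSim_cnd_right h'
    exact ⟨c', rfl⟩

theorem emb_map_atom {σ τ : List (Atom E C)}
    (h : Emb (AtomSim ent) isCndAtom σ τ) :
    Emb (TokSim ent) isCondTok (σ.map Tok.atom) (τ.map Tok.atom) := by
  induction h with
  | nil => exact .nil
  | cons r _ ih => exact .cons (.atom r) ih
  | skip p _ ih =>
    obtain ⟨c, rfl⟩ := p
    exact .skip ⟨c, rfl⟩ ih

/-- Transport an embedding across one unwrap step of the target. -/
theorem emb_unwrap {α β β' : Trace E C}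
    (h : Emb (TokSim ent) isCondTok α β) (hu : Unwrap β β') :
    ∃ α', Unwraps α α' ∧ Emb (TokSim ent) isCondTok α' β' := by
  cases hu with
  | step u v σ =>
    obtain ⟨l₁, l₂, rfl, h1, h2⟩ := h.decomp
    cases h2 with
    | @cons a _ l₂ _ r h2' =>
      cases r with
      | @crit τ _ hs =>
        refine ⟨l₁ ++ τ.map Tok.atom ++ l₂, ?_, ?_⟩
        · exact Relation.ReflTransGen.single (by simpa using Unwrap.step l₁ _ τ)
        · rw [List.append_assoc, List.append_assoc]
          exact h1.append ((emb_map_atom (seqSim_iff_emb.mp hs)).append h2')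
    | skip p _ =>
      obtain ⟨c, hc⟩ := p
      exact absurd hc (by simp [condTok])

theorem emb_unwraps {α β β' : Trace E C}
    (h : Emb (TokSim ent) isCondTok α β) (hu : Unwraps β β') :
    ∃ α', Unwraps α α' ∧ Emb (TokSim ent) isCondTok α' β' := by
  induction hu with
  | refl => exact ⟨α, Relation.ReflTransGen.refl, h⟩
  | tail _ step ih =>
    obtain ⟨α', h1, h2⟩ := ih
    obtain ⟨α'', h3, h4⟩ := emb_unwrap h2 step
    exact ⟨α'', h1.trans h3, h4⟩

end SimAux

/-- the trace simulation relation `⋉` is transitive (given that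
the entailment relation `⊨_c` on guard conditions is reflexive and
transitive). -/
theorem traceSim_trans {E C : Type} (ent : C → C → Prop)
    (ent_refl : ∀ c : C, ent c c)
    (ent_trans : ∀ c₁ c₂ c₃ : C, ent c₁ c₂ → ent c₂ c₃ → ent c₁ c₃) :
    ∀ α β γ : Trace E C, TraceSim ent α β → TraceSim ent β γ → TraceSim ent α γ := by
  rintro α β γ ⟨α₁, hαα₁, hf₁⟩ ⟨β₁, hββ₁, hf₂⟩
  have e1 : Emb (TokSim ent) isCondTok α₁ β := traceFun_iff_emb.mp hf₁
  have e2 : Emb (TokSim ent) isCondTok β₁ γ := traceFun_iff_emb.mp hf₂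
  obtain ⟨α₂, hα₁α₂, e3⟩ := emb_unwraps e1 hββ₁
  have e4 : Emb (TokSim ent) isCondTok α₂ γ := by
    refine Emb.trans' ?_ ?_ e3 e2
    · exact fun a b c r r' => tokSim_trans ent_trans r r'
    · intro b c hb r
      obtain ⟨cb, rfl⟩ := hb
      exact tokSim_cond_right r
  exact ⟨α₂, hαα₁.trans hα₁α₂, traceFun_iff_emb.mpr e4⟩

end SDPaper
end

section
/- If α₁ ⋉ α₂ and α₂ ↷ β₂ (i.e., β₂ is obtained from α₂ by exposing one critical segment), then there exists a trace β₁ such that α₁ ↷ β₁ and β₁ ⋉ β₂. -/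
namespace SDPaper

section EmbAux
variable {A B : Type}

/-- Auxiliary: relational embedding with skipped positions satisfying `K`. -/
inductive Emb_s2 (R : A → B → Prop) (K : B → Prop) : List A → List B → Prop
  | nil : Emb_s2 R K [] []
  | cons {a b l₁ l₂} : R a b → Emb_s2 R K l₁ l₂ → Emb_s2 R K (a :: l₁) (b :: l₂)
  | skip {b l₁ l₂} : K b → Emb_s2 R K l₁ l₂ → Emb_s2 R K l₁ (b :: l₂)

theorem Emb_s2.append {R : A → B → Prop} {K : B → Prop} {l₁ m₁ : List A} {l₂ m₂ : List B}
    (h : Emb_s2 R K l₁ l₂) (h' : Emb_s2 R K m₁ m₂) :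
    Emb_s2 R K (l₁ ++ m₁) (l₂ ++ m₂) := by
  induction h with
  | nil => simpa
  | cons r _ ih => exact .cons r ih
  | skip k _ ih => exact .skip k ih

theorem Emb_s2.map {A' B' : Type} {R : A → B → Prop} {K : B → Prop}
    {R' : A' → B' → Prop} {K' : B' → Prop} {f : A → A'} {g : B → B'} {l₁ l₂}
    (h : Emb_s2 R K l₁ l₂) (hR : ∀ a b, R a b → R' (f a) (g b)) (hK : ∀ b, K b → K' (g b)) :
    Emb_s2 R' K' (l₁.map f) (l₂.map g) := by
  induction h with
  | nil => exact .nil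
  | cons r _ ih => exact .cons (hR _ _ r) ih
  | skip k _ ih => exact .skip (hK _ k) ih

theorem Emb_s2.split {R : A → B → Prop} {K : B → Prop} {l₁ : List A} {p q : List B} {x : B}
    (h : Emb_s2 R K l₁ (p ++ x :: q)) (hx : ¬ K x) :
    ∃ a p₁ q₁, l₁ = p₁ ++ a :: q₁ ∧ R a x ∧ Emb_s2 R K p₁ p ∧ Emb_s2 R K q₁ q := by
  induction p generalizing l₁ with
  | nil =>
    cases h with
    | cons r h' => exact ⟨_, [], _, rfl, r, .nil, h'⟩
    | skip k _ => exact absurd k hx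
  | cons y p ih =>
    cases h with
    | cons r h' =>
      obtain ⟨a, p₁, q₁, rfl, hr, hp, hq⟩ := ih h'
      exact ⟨a, _ :: p₁, q₁, rfl, hr, .cons r hp, hq⟩
    | skip k h' =>
      obtain ⟨a, p₁, q₁, rfl, hr, hp, hq⟩ := ih h'
      exact ⟨a, p₁, q₁, rfl, hr, .skip k hp, hq⟩

theorem Emb_s2.nil_left {R : A → B → Prop} {K : B → Prop} {l₂ : List B}
    (h : ∀ x ∈ l₂, K x) : Emb_s2 R K [] l₂ := by
  induction l₂ with
  | nil => exact .nil
  | cons b l ih => exact .skip (h b (by simp)) (ih fun x hx => h x (by simp [hx]))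

theorem Emb_s2.toFin {R : A → B → Prop} {K : B → Prop} {l₁ l₂}
    (h : Emb_s2 R K l₁ l₂) :
    ∃ η : Fin l₁.length → Fin l₂.length, StrictMono η ∧
      (∀ i, R (l₁.get i) (l₂.get (η i))) ∧
      (∀ j, (∀ i, η i ≠ j) → K (l₂.get j)) := by
  induction h with
  | nil => exact ⟨id, fun i => i.elim0, fun i => i.elim0, fun j => j.elim0⟩
  | @cons a b l₁ l₂ r _ ih =>
    obtain ⟨η, hmono, hR, hK⟩ := ih
    refine ⟨fun i => if h : i.1 = 0 then ⟨0, Nat.succ_pos _⟩ else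
        have pf : i.1 - 1 < l₁.length := by
          have := i.2; simp only [List.length_cons] at this; omega
        ⟨(η ⟨i.1 - 1, pf⟩).1 + 1, by
          simpa using Nat.succ_lt_succ (η ⟨i.1 - 1, pf⟩).2⟩, ?_, ?_, ?_⟩
    · intro i j hij
      rcases i with ⟨i, hi⟩
      rcases j with ⟨j, hj⟩
      simp only [Fin.lt_def] at hij
      rcases j with _ | j
      · omega
      · rcases i with _ | i
        · simp [Fin.lt_def, Nat.succ_ne_zero]
        · have pi : i < l₁.length := by simp only [List.length_cons] at hi; omega
          have pj : j < l₁.length := by simp only [List.length_cons] at hj; omega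
          have h1 := hmono (show (⟨i, pi⟩ : Fin l₁.length) < ⟨j, pj⟩ by
            simp only [Fin.lt_def]; omega)
          simp only [Fin.lt_def] at h1 ⊢
          simp only [dif_neg (Nat.succ_ne_zero i), dif_neg (Nat.succ_ne_zero j)]
          have e1 : (η ⟨i + 1 - 1, by simp only [List.length_cons] at hi; omega⟩).1 = (η ⟨i, pi⟩).1 := rfl
          have e2 : (η ⟨j + 1 - 1, by simp only [List.length_cons] at hj; omega⟩).1 = (η ⟨j, pj⟩).1 := rfl
          omega
    · intro i
      rcases i with ⟨i, hi⟩
      rcases i with _ | i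
      · simpa using r
      · have pi : i < l₁.length := by simp only [List.length_cons] at hi; omega
        have hr := hR ⟨i, pi⟩
        simp only [dif_neg (Nat.succ_ne_zero i)]
        have e1 : (η ⟨i + 1 - 1, by simp only [List.length_cons] at hi; omega⟩) = (η ⟨i, pi⟩) := rfl
        rw [e1]
        simpa using hr
    · intro j hj
      rcases j with ⟨j, hj2⟩
      rcases j with _ | j
      · exact absurd (by simp) (hj ⟨0, Nat.succ_pos _⟩)
      · have pj : j < l₂.length := by simp only [List.length_cons] at hj2; omega
        have : ∀ i, η i ≠ ⟨j, pj⟩ := by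
          intro i hi
          have hilt : i.1 + 1 < (a :: l₁).length := by
            have := i.2; simp only [List.length_cons]; omega
          refine hj ⟨i.1 + 1, hilt⟩ ?_
          simp only [dif_neg (Nat.succ_ne_zero i.1)]
          have e1 : (η ⟨i.1 + 1 - 1, by simp only [List.length_cons] at hilt; omega⟩) = η i := rfl
          rw [e1, hi]
        simpa using hK ⟨j, pj⟩ this
  | @skip b l₁ l₂ k _ ih =>
    obtain ⟨η, hmono, hR, hK⟩ := ih
    refine ⟨fun i => ⟨(η i).1 + 1, by simpa using Nat.succ_lt_succ (η i).2⟩, ?_, ?_, ?_⟩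
    · intro i j hij
      have h1 := hmono hij
      simp only [Fin.lt_def] at h1 ⊢
      omega
    · intro i
      simpa using hR i
    · intro j hj
      rcases j with ⟨j, hj2⟩
      rcases j with _ | j
      · simpa using k
      · have pj : j < l₂.length := by simp only [List.length_cons] at hj2; omega
        have : ∀ i, η i ≠ ⟨j, pj⟩ := by
          intro i hi
          refine hj i (Fin.ext ?_)
          simp [hi]
        simpa using hK ⟨j, pj⟩ this

theorem Emb_s2.ofFin {R : A → B → Prop} {K : B → Prop} :
    ∀ {l₂ : List B} {l₁ : List A}
      (η : Fin l₁.length → Fin l₂.length), StrictMono η →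
      (∀ i, R (l₁.get i) (l₂.get (η i))) →
      (∀ j, (∀ i, η i ≠ j) → K (l₂.get j)) → Emb_s2 R K l₁ l₂ := by
  intro l₂
  induction l₂ with
  | nil =>
    intro l₁ η _ _ _
    cases l₁ with
    | nil => exact .nil
    | cons a l => exact (η ⟨0, Nat.succ_pos _⟩).elim0
  | cons b l₂ ih =>
    intro l₁ η hmono hR hK
    cases l₁ with
    | nil =>
      refine Emb_s2.nil_left ?_
      intro x hx
      obtain ⟨j, hj⟩ := List.mem_iff_get.mp hx
      exact hj ▸ hK j (fun i => i.elim0)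
    | cons a l₁ =>
      have hmem : ∀ i : Fin l₁.length, i.1 + 1 < (a :: l₁).length := by
        intro i; have := i.2; simp only [List.length_cons]; omega
      have hlen2 : ∀ k : Fin (b :: l₂).length, k.1 < l₂.length + 1 := by
        intro k; have := k.2; simpa using this
      by_cases h0 : (η ⟨0, Nat.succ_pos _⟩).1 = 0
      · have hpos : ∀ i : Fin l₁.length, 0 < (η ⟨i.1 + 1, hmem i⟩).1 := by
          intro i
          have h1 := hmono (show (⟨0, Nat.succ_pos _⟩ : Fin (a :: l₁).length) < ⟨i.1 + 1, hmem i⟩ by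
            simp [Fin.lt_def])
          simp only [Fin.lt_def] at h1
          omega
        refine Emb_s2.cons ?_ (ih (l₁ := l₁) (fun i => ⟨(η ⟨i.1 + 1, hmem i⟩).1 - 1, by
            have h2 := hlen2 (η ⟨i.1 + 1, hmem i⟩); have := hpos i; omega⟩) ?_ ?_ ?_)
        · have hr0 := hR ⟨0, Nat.succ_pos _⟩
          have he : η ⟨0, Nat.succ_pos _⟩ = ⟨0, Nat.succ_pos _⟩ := Fin.ext h0
          rw [he] at hr0
          simpa using hr0
        · intro i j hij
          have h1 := hmono (show (⟨i.1 + 1, hmem i⟩ : Fin (a :: l₁).length) < ⟨j.1 + 1, hmem j⟩ by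
            simp only [Fin.lt_def]; exact Nat.succ_lt_succ hij)
          have h2 := hpos i
          simp only [Fin.lt_def] at h1 ⊢
          omega
        · intro i
          have h2 := hpos i
          have hr := hR ⟨i.1 + 1, hmem i⟩
          have key : ∀ (m : Fin (b :: l₂).length) (hm : m.1 - 1 < l₂.length), 0 < m.1 →
              (b :: l₂).get m = l₂.get ⟨m.1 - 1, hm⟩ := by
            rintro ⟨k, hk⟩ hm hpos'
            rcases k with _ | k
            · simp at hpos'
            · rfl
          rw [← key _ _ h2]
          simpa using hr
        · intro j hj
          have hjlt : j.1 + 1 < (b :: l₂).length := by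
            have := j.2; simp only [List.length_cons]; omega
          have hne : ∀ i : Fin (a :: l₁).length, η i ≠ ⟨j.1 + 1, hjlt⟩ := by
            intro i hi
            rcases i with ⟨i, hilt⟩
            rcases i with _ | i
            · have h0' : (η ⟨0, hilt⟩).1 = 0 := h0
              have hv := congrArg Fin.val hi
              simp only at hv
              omega
            · have pi : i < l₁.length := by
                simp only [List.length_cons] at hilt; omega
              have hv := congrArg Fin.val hi
              simp only at hv
              have heq : (η ⟨i + 1, hilt⟩).1 = (η ⟨(⟨i, pi⟩ : Fin l₁.length).1 + 1, hmem ⟨i, pi⟩⟩).1 := rfl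
              refine hj ⟨i, pi⟩ (Fin.ext ?_)
              simp only
              omega
          simpa using hK ⟨j.1 + 1, hjlt⟩ hne
      · have hpos : ∀ i, 0 < (η i).1 := by
          intro i
          have h1 : η ⟨0, Nat.succ_pos _⟩ ≤ η i := hmono.monotone (by
            simp [Fin.le_def])
          have h2 := Nat.pos_of_ne_zero h0
          simp only [Fin.le_def] at h1
          omega
        have hηne : ∀ i, η i ≠ ⟨0, Nat.succ_pos _⟩ := by
          intro i hi
          have := hpos i
          rw [hi] at this
          simp at this
        refine Emb_s2.skip (by simpa using hK ⟨0, Nat.succ_pos _⟩ hηne) ?_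
        refine ih (l₁ := a :: l₁) (fun i => ⟨(η i).1 - 1, by
            have h2 := hlen2 (η i); have := hpos i; omega⟩) ?_ ?_ ?_
        · intro i j hij
          have h1 := hmono hij
          have h2 := hpos i
          simp only [Fin.lt_def] at h1 ⊢
          omega
        · intro i
          have h2 := hpos i
          have hr := hR i
          have key : ∀ (m : Fin (b :: l₂).length) (hm : m.1 - 1 < l₂.length), 0 < m.1 →
              (b :: l₂).get m = l₂.get ⟨m.1 - 1, hm⟩ := by
            rintro ⟨k, hk⟩ hm hpos'
            rcases k with _ | k
            · simp at hpos'
            · rfl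
          rw [← key _ _ h2]
          simpa using hr
        · intro j hj
          have hjlt : j.1 + 1 < (b :: l₂).length := by
            have := j.2; simp only [List.length_cons]; omega
          have hne : ∀ i, η i ≠ ⟨j.1 + 1, hjlt⟩ := by
            intro i hi
            have hv := congrArg Fin.val hi
            simp only at hv
            refine hj i (Fin.ext ?_)
            simp only
            omega
          simpa using hK ⟨j.1 + 1, hjlt⟩ hne

end EmbAux

/-- Auxiliary: `Unwrap` up to list equalities. -/
theorem unwrap_eq {E C : Type} {l r : Trace E C} (α β : Trace E C) (σ : List (Atom E C))
    (hl : l = α ++ Tok.crit σ :: β) (hr : r = α ++ σ.map Tok.atom ++ β) : Unwrap l r := by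
  subst hl; subst hr; exact Unwrap.step α β σ

/-- Auxiliary: pull a critical segment of the target of an unwrap step back
to the source. -/
theorem unwrap_pull {E C : Type} {α γ : Trace E C} (h : Unwrap α γ)
    {p q : Trace E C} {τ : List (Atom E C)} (hγ : γ = p ++ Tok.crit τ :: q) :
    ∃ p' q', α = p' ++ Tok.crit τ :: q' ∧
      Unwrap (p' ++ τ.map Tok.atom ++ q') (p ++ τ.map Tok.atom ++ q) := by
  cases h with
  | step a b σ =>
    rw [List.append_assoc] at hγ
    rcases List.append_eq_append_iff.mp hγ with ⟨x, hp, hrest⟩ | ⟨x, ha, hrest⟩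
    · -- p = a ++ x,  σ.map Tok.atom ++ b = x ++ Tok.crit τ :: q
      rcases List.append_eq_append_iff.mp hrest with ⟨y, hx, hb⟩ | ⟨y, hσm, hq⟩
      · -- x = σ.map Tok.atom ++ y,  b = y ++ Tok.crit τ :: q
        refine ⟨a ++ Tok.crit σ :: y, q, by simp [hb], ?_⟩
        refine unwrap_eq a (y ++ τ.map Tok.atom ++ q) σ (by simp) (by simp [hp, hx])
      · -- σ.map Tok.atom = x ++ y,  Tok.crit τ :: q = y ++ b
        cases y with
        | nil =>
          simp only [List.append_nil] at hσm
          simp only [List.nil_append] at hq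
          refine ⟨a ++ [Tok.crit σ], q, by simp [← hq], ?_⟩
          refine unwrap_eq a (τ.map Tok.atom ++ q) σ (by simp) (by simp [hp, ← hσm])
        | cons t y' =>
          exfalso
          have : Tok.crit τ ∈ List.map Tok.atom σ := by
            rw [hσm]
            have := (List.cons_eq_cons.mp hq.symm).1
            simp [← this]
          simp at this
    · -- a = p ++ x,  Tok.crit τ :: q = x ++ (σ.map Tok.atom ++ b)
      cases x with
      | nil =>
        simp only [List.nil_append] at hrest
        -- Tok.crit τ :: q = σ.map Tok.atom ++ b
        cases hσ : σ with
        | nil =>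
          subst hσ
          simp only [List.map_nil, List.nil_append] at hrest
          simp only [List.append_nil] at ha
          refine ⟨p ++ [Tok.crit []], q, by simp [ha, ← hrest], ?_⟩
          refine unwrap_eq p (τ.map Tok.atom ++ q) [] (by simp) (by simp)
        | cons s σ' =>
          exfalso
          subst hσ
          simp only [List.map_cons, List.cons_append] at hrest
          exact absurd (List.cons_eq_cons.mp hrest).1 (by simp)
      | cons t x' =>
        obtain ⟨ht, hq⟩ := List.cons_eq_cons.mp hrest
        refine ⟨p, x' ++ Tok.crit σ :: b, by simp [ha, ← ht], ?_⟩
        refine unwrap_eq (p ++ τ.map Tok.atom ++ x') b σ (by simp) (by simp [hq])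

/-- Auxiliary: pull a critical segment of the target of `↷*` back to the
source. -/
theorem unwraps_pull {E C : Type} {α γ : Trace E C} (h : Unwraps α γ)
    {p q : Trace E C} {τ : List (Atom E C)} (hγ : γ = p ++ Tok.crit τ :: q) :
    ∃ p' q', α = p' ++ Tok.crit τ :: q' ∧
      Unwraps (p' ++ τ.map Tok.atom ++ q') (p ++ τ.map Tok.atom ++ q) := by
  have h' : Relation.ReflTransGen Unwrap α γ := h
  clear h
  induction h' using Relation.ReflTransGen.head_induction_on with
  | refl => exact ⟨p, q, hγ, Relation.ReflTransGen.refl⟩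
  | head hstep _ ih =>
    obtain ⟨p₁, q₁, hmid, hu⟩ := ih
    obtain ⟨p₂, q₂, hα, hstep'⟩ := unwrap_pull hstep hmid
    exact ⟨p₂, q₂, hα, Relation.ReflTransGen.head hstep' hu⟩

end SDPaper


namespace SDPaper

/-- if `α₁ ⋉ α₂` and `α₂ ↷ β₂` (one unwrap step, exposing one
critical segment), then there exists a trace `β₁` with `α₁ ↷ β₁` and
`β₁ ⋉ β₂` (given that `⊨_c` is reflexive and transitive). -/
theorem traceSim_unwrap {E C : Type} (ent : C → C → Prop)
    (ent_refl : ∀ c : C, ent c c)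
    (ent_trans : ∀ c₁ c₂ c₃ : C, ent c₁ c₂ → ent c₂ c₃ → ent c₁ c₃)
    (α₁ α₂ β₂ : Trace E C) (h₁ : TraceSim ent α₁ α₂) (h₂ : Unwrap α₂ β₂) :
    ∃ β₁ : Trace E C, Unwrap α₁ β₁ ∧ TraceSim ent β₁ β₂ := by
  obtain ⟨β, hunw, η, hmono, hR, hK⟩ := h₁
  have hemb : Emb_s2 (TokSim ent) (fun t => ∃ c : C, t = condTok c) β α₂ :=
    Emb_s2.ofFin η hmono hR hK
  cases h₂ with
  | step A B σ =>
    have hcrit : ¬ ∃ c : C, Tok.crit σ = condTok c := by simp [condTok]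
    obtain ⟨t, p, q, hβ, hts, hp, hq⟩ := hemb.split hcrit
    cases hts with
    | @crit τ _ hseq =>
      obtain ⟨η₂, hm₂, hR₂, hK₂⟩ := hseq
      have hemb₂ : Emb_s2 (AtomSim ent) (fun x => ∃ c : C, x = Atom.cnd c) τ σ :=
        Emb_s2.ofFin η₂ hm₂ hR₂ hK₂
      have hembm : Emb_s2 (TokSim ent) (fun t => ∃ c : C, t = condTok c)
          (τ.map Tok.atom) (σ.map Tok.atom) :=
        hemb₂.map (fun _ _ r => TokSim.atom r)
          (fun _ hb => by obtain ⟨c, hc⟩ := hb; exact ⟨c, by rw [hc]; rfl⟩)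
      have hembAll : Emb_s2 (TokSim ent) (fun t => ∃ c : C, t = condTok c)
          (p ++ τ.map Tok.atom ++ q) (A ++ σ.map Tok.atom ++ B) := by
        rw [List.append_assoc, List.append_assoc]
        exact hp.append (hembm.append hq)
      obtain ⟨p', q', hα₁, hu⟩ := unwraps_pull hunw hβ
      refine ⟨p' ++ τ.map Tok.atom ++ q', ?_, ?_⟩
      · rw [hα₁]
        exact Unwrap.step p' q' τ
      · exact ⟨p ++ τ.map Tok.atom ++ q, hu, hembAll.toFin⟩

end SDPaper
end

section
/- The trace semantics of sequence diagrams possesses substitutivity: for every context C and all sequence diagrams D₁, D₂, if ⟦D₁⟧ = ⟦D₂⟧ then ⟦C[D₁]⟧ = ⟦C[D₂]⟧. -/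
namespace SDPaper

/-! ### Obligations, meanings and the operations of the trace semantics -/

/-- An obligation is a set of traces. -/
abbrev Obl (E C : Type) : Type := Set (Trace E C)

/-- A meaning is a set of (alternative) obligations. -/
abbrev Meaning (E C : Type) : Type := Set (Obl E C)

/-- `↓M` removes redundant obligations: it keeps the obligations of `M` that do
not strictly contain another obligation of `M`. -/
def down {A : Type} (M : Set (Set A)) : Set (Set A) :=
  {O | O ∈ M ∧ ¬ ∃ O' ∈ M, O' ⊂ O}

/-- Concatenation `•` of two sets of strings. -/
def setConcat {A : Type} (O₁ O₂ : Set (List A)) : Set (List A) :=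
  {t | ∃ t₁ ∈ O₁, ∃ t₂ ∈ O₂, t = t₁ ++ t₂}

/-- Pairwise concatenation `•♯` on sets of sets of strings. -/
def mConcat {A : Type} (M₁ M₂ : Set (Set (List A))) : Set (Set (List A)) :=
  {O | ∃ O₁ ∈ M₁, ∃ O₂ ∈ M₂, O = setConcat O₁ O₂}

/-- Pairwise union `∪♯` on sets of sets. -/
def mUnion {A : Type} (M₁ M₂ : Set (Set A)) : Set (Set A) :=
  {O | ∃ O₁ ∈ M₁, ∃ O₂ ∈ M₂, O = O₁ ∪ O₂}

/-- Pairwise intersection `∩♯` on sets of sets. -/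
def mInter {A : Type} (M₁ M₂ : Set (Set A)) : Set (Set A) :=
  {O | ∃ O₁ ∈ M₁, ∃ O₂ ∈ M₂, O = O₁ ∩ O₂}

/-- `Interleave μ ν σ` holds iff `σ ∈ μ ⫴ ν`, i.e. `σ` is an interleaving of
`μ` and `ν`. -/
inductive Interleave {A : Type} : List A → List A → List A → Prop where
  | nilLeft (μ : List A) : Interleave [] μ μ
  | nilRight (μ : List A) : Interleave μ [] μ
  | consLeft {x : A} {μ ν σ : List A} :
      Interleave μ ν σ → Interleave (x :: μ) ν (x :: σ)
  | consRight {y : A} {μ ν σ : List A} :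
      Interleave μ ν σ → Interleave μ (y :: ν) (y :: σ)

/-- `O₁ ⫴̂ O₂`: the set of obligations `O` such that every pair of traces
`σ₁ ∈ O₁`, `σ₂ ∈ O₂` has an interleaving in `O`. -/
def oblInterleave {A : Type} (O₁ O₂ : Set (List A)) : Set (Set (List A)) :=
  {O | ∀ σ₁ ∈ O₁, ∀ σ₂ ∈ O₂, ∃ σ ∈ O, Interleave σ₁ σ₂ σ}

/-- `M₁ ⫴♭ M₂`: interleaving of meanings, with redundant obligations removed
by `↓`. -/
def mInterleave {A : Type} (M₁ M₂ : Set (Set (List A))) : Set (Set (List A)) :=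
  down (⋃ O₁ ∈ M₁, ⋃ O₂ ∈ M₂, oblInterleave O₁ O₂)

/-- Tag every token of a trace with the label `ℓ`. -/
def tagTrace {A L : Type} (t : List A) (ℓ : L) : List (A × L) :=
  t.map (fun a => (a, ℓ))

/-- Remove the tags of a tagged trace. -/
def untagTrace {A L : Type} (t : List (A × L)) : List A := t.map Prod.fst

/-- `tag` lifted to meanings. -/
def tagM {A L : Type} (M : Set (Set (List A))) (ℓ : L) : Set (Set (List (A × L))) :=
  (fun O => (fun t => tagTrace t ℓ) '' O) '' M

/-- `untag` lifted to meanings. -/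
def untagM {A L : Type} (M : Set (Set (List (A × L)))) : Set (Set (List A)) :=
  (fun O => untagTrace '' O) '' M

/-- The fold rewriting relation `⊸` on (possibly infinite) obligations,
eliminating an unnecessary decision point. -/
def FoldStepSet {E C : Type} (ent : C → C → Prop) (taut : C) (disj : C → C → C)
    (O O' : Obl E C) : Prop :=
  ∃ (α β : Trace E C) (c c' : C),
    ent (disj c c') taut ∧
    (α ++ condTok c :: β) ∈ O ∧ (α ++ condTok c' :: β) ∈ O ∧
    (α ++ condTok c :: β : Trace E C) ≠ (α ++ condTok c' :: β) ∧
    O' = insert (α ++ β) (O \ {α ++ condTok c :: β, α ++ condTok c' :: β})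

open Classical in
/-- `fold(O)`: the normal form of the obligation `O` under the fold rewriting
relation (chosen by choice; `O` itself if no normal form is reachable). -/
noncomputable def foldObl {E C : Type} (ent : C → C → Prop) (taut : C)
    (disj : C → C → C) (O : Obl E C) : Obl E C :=
  if h : ∃ O' : Obl E C, Relation.ReflTransGen (FoldStepSet ent taut disj) O O' ∧
      ∀ O'' : Obl E C, ¬ FoldStepSet ent taut disj O' O''
  then h.choose else O

/-- `fold` lifted to meanings. -/
noncomputable def foldM {E C : Type} (ent : C → C → Prop) (taut : C)
    (disj : C → C → C) (M : Meaning E C) : Meaning E C :=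
  (foldObl ent taut disj) '' M

/-- `unwrap(t)`: the normal form of `t` under `↷`, exposing all critical
segments. -/
def unwrapTrace {E C : Type} (t : Trace E C) : Trace E C :=
  t.flatMap fun tok =>
    match tok with
    | Tok.atom a => [Tok.atom a]
    | Tok.crit σ => σ.map Tok.atom

/-- The sequence of events and conditions of a trace without critical
segments. -/
def traceAtoms {E C : Type} (t : Trace E C) : List (Atom E C) :=
  t.flatMap fun tok =>
    match tok with
    | Tok.atom a => [a]
    | Tok.crit σ => σ

/-- `wrap(σ) = ⟨σ⟩`. -/
def wrapTrace {E C : Type} (t : Trace E C) : Trace E C :=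
  [Tok.crit (traceAtoms t)]

/-- `unwrap` lifted to meanings. -/
def unwrapM {E C : Type} (M : Meaning E C) : Meaning E C :=
  (fun O => unwrapTrace '' O) '' M

/-- `wrap` lifted to meanings. -/
def wrapM {E C : Type} (M : Meaning E C) : Meaning E C :=
  (fun O => wrapTrace '' O) '' M

/-- The singleton meaning `{{t}}`. -/
def unitM {E C : Type} (t : Trace E C) : Meaning E C := {{t}}

/-! ### Sequence diagrams and their trace semantics -/

/-- The signature of the ambient setting: guard conditions with entailment
`⊨_c` (reflexive and transitive), negation `¬_c`, disjunction `∨_c`, the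
tautology `true`, and a lifelines map associating each event with the set of
the lifelines (names in `N`) it occurs on. -/
structure Sig (E C N : Type) where
  ent : C → C → Prop
  neg : C → C
  disj : C → C → C
  taut : C
  ll : E → Set N
  ent_refl : ∀ c : C, ent c c
  ent_trans : ∀ c₁ c₂ c₃ : C, ent c₁ c₂ → ent c₂ c₃ → ent c₁ c₃

/-- Abstract syntax of sequence diagrams: `τ`, events, `opt`, `alt`, `loop`,
`critical`, `par`, `strict`, `seq` and `block(L,ι,↠)` (with nonempty finite
label set `L = Fin (n+1)`, `ι : L → SD` and strict sequencing order `↠`). -/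
inductive SD (E C : Type) : Type where
  | tau : SD E C
  | evt (e : E) : SD E C
  | opt (c : C) (D : SD E C) : SD E C
  | alt (c : C) (D₁ D₂ : SD E C) : SD E C
  | loop (c : C) (D : SD E C) : SD E C
  | critical (D : SD E C) : SD E C
  | par (D₁ D₂ : SD E C) : SD E C
  | strict (D₁ D₂ : SD E C) : SD E C
  | seq (D₁ D₂ : SD E C) : SD E C
  | block (n : ℕ) (ι : Fin (n + 1) → SD E C) (r : Fin (n + 1) → Fin (n + 1) → Prop) : SD E C

/-- The lifelines of an event or a condition. -/
def atomLL {E C N : Type} (S : Sig E C N) : Atom E C → Set N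
  | Atom.evt e => S.ll e
  | Atom.cnd _ => ∅

/-- The lifelines of a token. -/
def tokLL {E C N : Type} (S : Sig E C N) : Tok E C → Set N
  | Tok.atom a => atomLL S a
  | Tok.crit σ => ⋃ a ∈ σ, atomLL S a

/-- Two tokens are related by `~` iff they share lifelines. -/
def shareLL {E C N : Type} (S : Sig E C N) (t₁ t₂ : Tok E C) : Prop :=
  (tokLL S t₁ ∩ tokLL S t₂).Nonempty

/-- `st(↠)`: the tagged traces satisfying the strict sequencing order `↠`:
whenever the label of position `i` precedes (w.r.t. `↠*`) the distinct label
of position `j`, then `i ≤ j`. -/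
def ST {E C : Type} {n : ℕ} (r : Fin (n + 1) → Fin (n + 1) → Prop) :
    Set (List (Tok E C × Fin (n + 1))) :=
  {σ | ∀ i j : Fin σ.length,
    Relation.ReflTransGen r (σ.get i).2 (σ.get j).2 →
    (σ.get i).2 ≠ (σ.get j).2 → (i : ℕ) ≤ (j : ℕ)}

/-- `Tt_seq`: the tagged traces satisfying the weak sequencing order: a token
tagged `1` (i.e. from the first operand, tag `0 : Fin 2`) sharing lifelines
with a token tagged `2` (tag `1 : Fin 2`) must occur before it. -/
def TTseq {E C N : Type} (S : Sig E C N) : Set (List (Tok E C × Fin 2)) :=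
  {σ | ∀ i j : Fin σ.length,
    (σ.get i).2 = 0 → (σ.get j).2 = 1 →
    shareLL S (σ.get i).1 (σ.get j).1 → (i : ℕ) < (j : ℕ)}

/-- Weak sequencing `⨝♭` of two meanings. -/
def weakSeq {E C N : Type} (S : Sig E C N) (M₁ M₂ : Meaning E C) : Meaning E C :=
  untagM (mInter {TTseq S} (mInterleave (tagM M₁ (0 : Fin 2)) (tagM M₂ (1 : Fin 2))))

/-- Interleaving `⫴♭` of a finite nonempty family of meanings. -/
def famInterleave {A : Type} : (k : ℕ) → (Fin (k + 1) → Set (Set (List A))) → Set (Set (List A))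
  | 0, f => f 0
  | k + 1, f => mInterleave (f 0) (famInterleave k (fun i => f i.succ))

/-- The iteration `Xᵢ` in the semantics of `loop(c,D)`:
`X₀ = {{¬_c(c)}}` and `X_{i+1} = ({{c}} •♯ (⟦D⟧ ⨝♭ Xᵢ)) ∪♯ {{¬_c(c)}}`. -/
def loopX {E C N : Type} (S : Sig E C N) (c : C) (M : Meaning E C) : ℕ → Meaning E C
  | 0 => unitM [condTok (S.neg c)]
  | i + 1 =>
      mUnion (mConcat (unitM [condTok c]) (weakSeq S M (loopX S c M i)))
        (unitM [condTok (S.neg c)])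

/-- The trace semantics `⟦D⟧` of a sequence diagram: the set of its
alternative obligations. -/
noncomputable def sem {E C N : Type} (S : Sig E C N) : SD E C → Meaning E C
  | SD.tau => unitM []
  | SD.evt e => unitM [evtTok e]
  | SD.opt c D =>
      down (foldM S.ent S.taut S.disj
        (mUnion (mConcat (unitM [condTok c]) (sem S D)) (unitM [condTok (S.neg c)])))
  | SD.alt c D₁ D₂ =>
      down (foldM S.ent S.taut S.disj
        (mUnion (mConcat (unitM [condTok c]) (sem S D₁))
          (mConcat (unitM [condTok (S.neg c)]) (sem S D₂))))
  | SD.loop c D => ⋃ i : ℕ, loopX S c (sem S D) i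
  | SD.critical D => wrapM (down (foldM S.ent S.taut S.disj (unwrapM (sem S D))))
  | SD.par D₁ D₂ => mInterleave (sem S D₁) (sem S D₂)
  | SD.strict D₁ D₂ => down (foldM S.ent S.taut S.disj (mConcat (sem S D₁) (sem S D₂)))
  | SD.seq D₁ D₂ => weakSeq S (sem S D₁) (sem S D₂)
  | SD.block n ι r =>
      untagM (mInter {ST r} (famInterleave n (fun ℓ => tagM (sem S (ι ℓ)) ℓ)))

/-- `Evt(D)`: the set of observable events occurring in `D`. -/
def evts {E C : Type} : SD E C → Set E
  | SD.tau => ∅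
  | SD.evt e => {e}
  | SD.opt _ D => evts D
  | SD.alt _ D₁ D₂ => evts D₁ ∪ evts D₂
  | SD.loop _ D => evts D
  | SD.critical D => evts D
  | SD.par D₁ D₂ => evts D₁ ∪ evts D₂
  | SD.strict D₁ D₂ => evts D₁ ∪ evts D₂
  | SD.seq D₁ D₂ => evts D₁ ∪ evts D₂
  | SD.block n ι _ => ⋃ ℓ : Fin (n + 1), evts (ι ℓ)

open Classical in
/-- `hide_U(D)`: replace every occurrence of each event `e ∈ U` in `D`
with `τ`. -/
noncomputable def hide {E C : Type} (U : Set E) : SD E C → SD E C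
  | SD.tau => SD.tau
  | SD.evt e => if e ∈ U then SD.tau else SD.evt e
  | SD.opt c D => SD.opt c (hide U D)
  | SD.alt c D₁ D₂ => SD.alt c (hide U D₁) (hide U D₂)
  | SD.loop c D => SD.loop c (hide U D)
  | SD.critical D => SD.critical (hide U D)
  | SD.par D₁ D₂ => SD.par (hide U D₁) (hide U D₂)
  | SD.strict D₁ D₂ => SD.strict (hide U D₁) (hide U D₂)
  | SD.seq D₁ D₂ => SD.seq (hide U D₁) (hide U D₂)
  | SD.block n ι r => SD.block n (fun ℓ => hide U (ι ℓ)) r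

/-- `D₁ ⪰ D₂`: `D₁` refines `D₂`, i.e. for every obligation `O₁ ∈ ⟦D₁⟧` there
is an obligation `O₂ ∈ ⟦D₂⟧` such that every trace of `O₂` is simulated by
some trace of `O₁`. -/
def Refines {E C N : Type} (S : Sig E C N) (D₁ D₂ : SD E C) : Prop :=
  ∀ O₁ ∈ sem S D₁, ∃ O₂ ∈ sem S D₂, ∀ t₂ ∈ O₂, ∃ t₁ ∈ O₁, TraceSim S.ent t₁ t₂

end SDPaper

namespace SDPaper

/-- A context is a sequence diagram with exactly one of its sub-fragments
replaced by a special hole symbol `𝕩`. -/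
inductive Ctx (E C : Type) : Type where
  | hole : Ctx E C
  | opt (c : C) (K : Ctx E C) : Ctx E C
  | altLeft (c : C) (K : Ctx E C) (D₂ : SD E C) : Ctx E C
  | altRight (c : C) (D₁ : SD E C) (K : Ctx E C) : Ctx E C
  | loop (c : C) (K : Ctx E C) : Ctx E C
  | critical (K : Ctx E C) : Ctx E C
  | parLeft (K : Ctx E C) (D₂ : SD E C) : Ctx E C
  | parRight (D₁ : SD E C) (K : Ctx E C) : Ctx E C
  | strictLeft (K : Ctx E C) (D₂ : SD E C) : Ctx E C
  | strictRight (D₁ : SD E C) (K : Ctx E C) : Ctx E C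
  | seqLeft (K : Ctx E C) (D₂ : SD E C) : Ctx E C
  | seqRight (D₁ : SD E C) (K : Ctx E C) : Ctx E C
  | block (n : ℕ) (ι : Fin (n + 1) → SD E C) (ℓ₀ : Fin (n + 1)) (K : Ctx E C)
      (r : Fin (n + 1) → Fin (n + 1) → Prop) : Ctx E C

/-- `C[D]`: the embedding of the sequence diagram `D` into the context `C`,
obtained by replacing the hole `𝕩` with `D`. -/
def Ctx.fill {E C : Type} : Ctx E C → SD E C → SD E C
  | Ctx.hole, D => D
  | Ctx.opt c K, D => SD.opt c (K.fill D)
  | Ctx.altLeft c K D₂, D => SD.alt c (K.fill D) D₂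
  | Ctx.altRight c D₁ K, D => SD.alt c D₁ (K.fill D)
  | Ctx.loop c K, D => SD.loop c (K.fill D)
  | Ctx.critical K, D => SD.critical (K.fill D)
  | Ctx.parLeft K D₂, D => SD.par (K.fill D) D₂
  | Ctx.parRight D₁ K, D => SD.par D₁ (K.fill D)
  | Ctx.strictLeft K D₂, D => SD.strict (K.fill D) D₂
  | Ctx.strictRight D₁ K, D => SD.strict D₁ (K.fill D)
  | Ctx.seqLeft K D₂, D => SD.seq (K.fill D) D₂
  | Ctx.seqRight D₁ K, D => SD.seq D₁ (K.fill D)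
  | Ctx.block n ι ℓ₀ K r, D => SD.block n (Function.update ι ℓ₀ (K.fill D)) r

/-- substitutivity of the trace semantics: for every context `C`
and all sequence diagrams `D₁`, `D₂`, if `⟦D₁⟧ = ⟦D₂⟧` then
`⟦C[D₁]⟧ = ⟦C[D₂]⟧`. -/
theorem sem_substitutivity {E C N : Type} (S : Sig E C N) (K : Ctx E C)
    (D₁ D₂ : SD E C) (h : sem S D₁ = sem S D₂) :
    sem S (K.fill D₁) = sem S (K.fill D₂) := by
  induction K with
  | hole => exact h
  | opt c K ih => simp only [Ctx.fill, sem, ih]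
  | altLeft c K D ih => simp only [Ctx.fill, sem, ih]
  | altRight c D K ih => simp only [Ctx.fill, sem, ih]
  | loop c K ih => simp only [Ctx.fill, sem, ih]
  | critical K ih => simp only [Ctx.fill, sem, ih]
  | parLeft K D ih => simp only [Ctx.fill, sem, ih]
  | parRight D K ih => simp only [Ctx.fill, sem, ih]
  | strictLeft K D ih => simp only [Ctx.fill, sem, ih]
  | strictRight D K ih => simp only [Ctx.fill, sem, ih]
  | seqLeft K D ih => simp only [Ctx.fill, sem, ih]
  | seqRight D K ih => simp only [Ctx.fill, sem, ih]
  | block n ι ℓ₀ K r ih =>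
    simp only [Ctx.fill, sem]
    have hfun : (fun ℓ => tagM (sem S (Function.update ι ℓ₀ (K.fill D₁) ℓ)) ℓ)
        = (fun ℓ => tagM (sem S (Function.update ι ℓ₀ (K.fill D₂) ℓ)) ℓ) := by
      funext ℓ
      by_cases hl : ℓ = ℓ₀
      · subst hl; simp [ih]
      · simp [Function.update, hl]
    rw [hfun]

end SDPaper
end

section
/- The conformance relation ⊳ on sequence diagrams is reflexive: D ⊳ D for every SD D. -/
namespace SDPaper

/-! ### Names, events over names, substitutions and conformance -/

/-- An event over a denumerable set `Name` of names: a sending (`send = true`)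
or receiving (`send = false`) event of a message with a name, a sender, a
receiver and a parameter list of names. -/
structure Event (Name : Type) : Type where
  send : Bool
  msg : Name
  sender : Name
  receiver : Name
  params : List Name

/-- The action of a substitution `ρ : Name → Name` on an event. -/
def Event.rename {Name : Type} (ρ : Name → Name) (e : Event Name) : Event Name :=
  ⟨e.send, ρ e.msg, ρ e.sender, ρ e.receiver, e.params.map ρ⟩

/-- The lifelines of an event: a sending event is associated with its sender
and a receiving event with its receiver. -/
def Event.lifelines {Name : Type} (e : Event Name) : Set Name :=
  if e.send then {e.sender} else {e.receiver}

/-- The ambient setting over a set `Name` of names: guard conditions built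
over `Name`, with entailment `⊨_c` (reflexive and transitive), negation `¬_c`,
disjunction `∨_c`, the tautology `true`, and the action `crename` of
substitutions on conditions (respecting identity and composition). -/
structure NSig (Name C : Type) where
  ent : C → C → Prop
  neg : C → C
  disj : C → C → C
  taut : C
  crename : (Name → Name) → C → C
  ent_refl : ∀ c : C, ent c c
  ent_trans : ∀ c₁ c₂ c₃ : C, ent c₁ c₂ → ent c₂ c₃ → ent c₁ c₃
  crename_id : ∀ c : C, crename id c = c
  crename_comp : ∀ (ρ₁ ρ₂ : Name → Name) (c : C),
    crename (ρ₂ ∘ ρ₁) c = crename ρ₂ (crename ρ₁ c)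

/-- The signature induced by an ambient setting over names. -/
def NSig.toSig {Name C : Type} (S : NSig Name C) : Sig (Event Name) C Name where
  ent := S.ent
  neg := S.neg
  disj := S.disj
  taut := S.taut
  ll := Event.lifelines
  ent_refl := S.ent_refl
  ent_trans := S.ent_trans

/-- The action of a substitution `ρ : Name → Name` on a sequence diagram:
substitute `ρ(n)` for each occurrence of each name `n`. -/
def sdRename {Name C : Type} (S : NSig Name C) (ρ : Name → Name) :
    SD (Event Name) C → SD (Event Name) C
  | SD.tau => SD.tau
  | SD.evt e => SD.evt (e.rename ρ)
  | SD.opt c D => SD.opt (S.crename ρ c) (sdRename S ρ D)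
  | SD.alt c D₁ D₂ => SD.alt (S.crename ρ c) (sdRename S ρ D₁) (sdRename S ρ D₂)
  | SD.loop c D => SD.loop (S.crename ρ c) (sdRename S ρ D)
  | SD.critical D => SD.critical (sdRename S ρ D)
  | SD.par D₁ D₂ => SD.par (sdRename S ρ D₁) (sdRename S ρ D₂)
  | SD.strict D₁ D₂ => SD.strict (sdRename S ρ D₁) (sdRename S ρ D₂)
  | SD.seq D₁ D₂ => SD.seq (sdRename S ρ D₁) (sdRename S ρ D₂)
  | SD.block n ι r => SD.block n (fun ℓ => sdRename S ρ (ι ℓ)) r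

/-- `D₁ ⊳_{ρ,U} D₂`: `D₁` conforms to `D₂` with respect to the substitution
`ρ` and the set of events `U ⊆ Evt(D₁)`, i.e. `ρ(U) ∩ Evt(D₂) = ∅` and
`ρ(hide_U(D₁)) ⪰ D₂`. -/
noncomputable def ConformsW {Name C : Type} (S : NSig Name C)
    (D₁ D₂ : SD (Event Name) C) (ρ : Name → Name) (U : Set (Event Name)) : Prop :=
  U ⊆ evts D₁ ∧
  Event.rename ρ '' U ∩ evts D₂ = ∅ ∧
  Refines S.toSig (sdRename S ρ (hide U D₁)) D₂

/-- `D₁ ⊳ D₂`: `D₁` conforms to `D₂` with respect to some substitution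
`ρ : Name → Name` and some set of events `U ⊆ Evt(D₁)`. -/
noncomputable def Conforms {Name C : Type} (S : NSig Name C)
    (D₁ D₂ : SD (Event Name) C) : Prop :=
  ∃ (ρ : Name → Name) (U : Set (Event Name)), ConformsW S D₁ D₂ ρ U

end SDPaper

namespace SDPaper

theorem atomSim_refl {E C : Type} {ent : C → C → Prop}
    (hrefl : ∀ c, ent c c) (a : Atom E C) : AtomSim ent a a := by
  cases a with
  | evt e => exact AtomSim.evt e
  | cnd c => exact AtomSim.cnd (hrefl c)

theorem tokSim_refl {E C : Type} {ent : C → C → Prop}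
    (hrefl : ∀ c, ent c c) (t : Tok E C) : TokSim ent t t := by
  cases t with
  | atom a => exact TokSim.atom (atomSim_refl hrefl a)
  | crit σ =>
      refine TokSim.crit ⟨id, strictMono_id, fun i => atomSim_refl hrefl _, ?_⟩
      intro j hj; exact absurd rfl (hj j)

theorem traceSim_refl {E C : Type} {ent : C → C → Prop}
    (hrefl : ∀ c, ent c c) (t : Trace E C) : TraceSim ent t t := by
  refine ⟨t, Relation.ReflTransGen.refl, id, strictMono_id,
    fun i => tokSim_refl hrefl _, ?_⟩
  intro j hj; exact absurd rfl (hj j)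

theorem hide_empty {E C : Type} (D : SD E C) : hide (∅ : Set E) D = D := by
  induction D with
  | tau => rfl
  | evt e => simp [hide]
  | opt c D ih => simp [hide, ih]
  | alt c D₁ D₂ ih₁ ih₂ => simp [hide, ih₁, ih₂]
  | loop c D ih => simp [hide, ih]
  | critical D ih => simp [hide, ih]
  | par D₁ D₂ ih₁ ih₂ => simp [hide, ih₁, ih₂]
  | strict D₁ D₂ ih₁ ih₂ => simp [hide, ih₁, ih₂]
  | seq D₁ D₂ ih₁ ih₂ => simp [hide, ih₁, ih₂]
  | block n ι r ih => simp only [hide]; congr 1; funext ℓ; exact ih ℓ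

theorem event_rename_id {Name : Type} (e : Event Name) : Event.rename id e = e := by
  cases e; simp [Event.rename]

theorem sdRename_id {Name C : Type} (S : NSig Name C) (D : SD (Event Name) C) :
    sdRename S id D = D := by
  induction D with
  | tau => rfl
  | evt e => simp [sdRename, event_rename_id]
  | opt c D ih => simp [sdRename, ih, S.crename_id]
  | alt c D₁ D₂ ih₁ ih₂ => simp [sdRename, ih₁, ih₂, S.crename_id]
  | loop c D ih => simp [sdRename, ih, S.crename_id]
  | critical D ih => simp [sdRename, ih]
  | par D₁ D₂ ih₁ ih₂ => simp [sdRename, ih₁, ih₂]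
  | strict D₁ D₂ ih₁ ih₂ => simp [sdRename, ih₁, ih₂]
  | seq D₁ D₂ ih₁ ih₂ => simp [sdRename, ih₁, ih₂]
  | block n ι r ih => simp only [sdRename]; congr 1; funext ℓ; exact ih ℓ

/-- the conformance relation `⊳` on sequence diagrams is
reflexive: `D ⊳ D` for every sequence diagram `D`. -/
theorem conforms_refl {Name C : Type} (S : NSig Name C) (D : SD (Event Name) C) :
    Conforms S D D := by
  refine ⟨id, ∅, by simp, by simp, ?_⟩
  rw [hide_empty, sdRename_id]
  intro O₁ hO₁
  exact ⟨O₁, hO₁, fun t₂ ht₂ => ⟨t₂, ht₂, traceSim_refl S.ent_refl t₂⟩⟩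

end SDPaper
end

section
/- For every trace t₁ and t₂ and every substitution ρ : Name → Name, if t₁ ⋉ t₂ then ρ(t₁) ⋉ ρ(t₂), where ρ acts on a trace by substituting ρ(n) for each occurrence of each name n (in events, conditions, and inside critical segments), assuming the entailment relation on conditions is preserved by substitution (c₂ ⊨_c c₁ implies ρ(c₂) ⊨_c ρ(c₁)). -/
namespace SDPaper

/-- The action of a substitution `ρ : Name → Name` on an event or a condition,
where `cr` is the action of substitutions on guard conditions. -/
def atomRename {Name C : Type} (cr : (Name → Name) → C → C) (ρ : Name → Name) :
    Atom (Event Name) C → Atom (Event Name) C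
  | Atom.evt e => Atom.evt (e.rename ρ)
  | Atom.cnd c => Atom.cnd (cr ρ c)

/-- The action of a substitution on a token (acting inside critical
segments as well). -/
def tokRename {Name C : Type} (cr : (Name → Name) → C → C) (ρ : Name → Name) :
    Tok (Event Name) C → Tok (Event Name) C
  | Tok.atom a => Tok.atom (atomRename cr ρ a)
  | Tok.crit σ => Tok.crit (σ.map (atomRename cr ρ))

/-- The action `ρ(t)` of a substitution on a trace: substitute `ρ(n)` for each
occurrence of each name `n` in events, conditions and inside critical
segments. -/
def traceRename {Name C : Type} (cr : (Name → Name) → C → C) (ρ : Name → Name)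
    (t : Trace (Event Name) C) : Trace (Event Name) C :=
  t.map (tokRename cr ρ)

lemma unwrap_rename {Name C : Type} (cr : (Name → Name) → C → C) (ρ : Name → Name)
    {α β : Trace (Event Name) C} (h : Unwrap α β) :
    Unwrap (traceRename cr ρ α) (traceRename cr ρ β) := by
  cases h with
  | step a b σ =>
    have := Unwrap.step (E := Event Name) (C := C)
      (a.map (tokRename cr ρ)) (b.map (tokRename cr ρ)) (σ.map (atomRename cr ρ))
    simpa [traceRename, tokRename, List.map_map, Function.comp_def] using this

lemma unwraps_rename {Name C : Type} (cr : (Name → Name) → C → C) (ρ : Name → Name)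
    {α β : Trace (Event Name) C} (h : Unwraps α β) :
    Unwraps (traceRename cr ρ α) (traceRename cr ρ β) := by
  induction h with
  | refl => exact Relation.ReflTransGen.refl
  | tail _ hstep ih => exact ih.tail (unwrap_rename cr ρ hstep)

lemma atomSim_rename {Name C : Type} {ent : C → C → Prop}
    (cr : (Name → Name) → C → C) (ρ : Name → Name)
    (ent_rename : ∀ c₁ c₂ : C, ent c₂ c₁ → ent (cr ρ c₂) (cr ρ c₁))
    {a b : Atom (Event Name) C} (h : AtomSim ent a b) :
    AtomSim ent (atomRename cr ρ a) (atomRename cr ρ b) := by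
  cases h with
  | evt e => exact AtomSim.evt _
  | cnd h => exact AtomSim.cnd (ent_rename _ _ h)

lemma tokSim_rename {Name C : Type} {ent : C → C → Prop}
    (cr : (Name → Name) → C → C) (ρ : Name → Name)
    (ent_rename : ∀ c₁ c₂ : C, ent c₂ c₁ → ent (cr ρ c₂) (cr ρ c₁))
    {a b : Tok (Event Name) C} (h : TokSim ent a b) :
    TokSim ent (tokRename cr ρ a) (tokRename cr ρ b) := by
  cases h with
  | atom h => exact TokSim.atom (atomSim_rename cr ρ ent_rename h)
  | @crit α γ h =>
    obtain ⟨η, hmono, hsim, hcnd⟩ := h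
    have hα : (α.map (atomRename cr ρ)).length = α.length := List.length_map _
    have hγ : (γ.map (atomRename cr ρ)).length = γ.length := List.length_map _
    refine TokSim.crit ⟨fun i => (η (i.cast hα)).cast hγ.symm, ?_, ?_, ?_⟩
    · intro i j hij
      simpa using hmono (show (i.cast hα) < j.cast hα from by simpa using hij)
    · intro i
      have := atomSim_rename cr ρ ent_rename (hsim (i.cast hα))
      simpa [List.get_eq_getElem, List.getElem_map] using this
    · intro j hj
      obtain ⟨c, hc⟩ := hcnd (j.cast hγ) (by
        intro i hi
        exact hj (i.cast hα.symm) (by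
          apply Fin.ext
          simpa using congrArg Fin.val hi))
      refine ⟨cr ρ c, ?_⟩
      have hc' : γ[(j : ℕ)] = Atom.cnd c := hc
      simp [List.get_eq_getElem, List.getElem_map, hc', atomRename]

/-- substitution preserves trace simulation: for all traces
`t₁, t₂` and every substitution `ρ : Name → Name`, if `t₁ ⋉ t₂` then
`ρ(t₁) ⋉ ρ(t₂)`, assuming the entailment relation on conditions (reflexive and
transitive) is preserved by substitution: `c₂ ⊨_c c₁` implies
`ρ(c₂) ⊨_c ρ(c₁)`. -/
theorem rename_preserves_traceSim {Name C : Type} (ent : C → C → Prop)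
    (ent_refl : ∀ c : C, ent c c)
    (ent_trans : ∀ c₁ c₂ c₃ : C, ent c₁ c₂ → ent c₂ c₃ → ent c₁ c₃)
    (cr : (Name → Name) → C → C) (ρ : Name → Name)
    (ent_rename : ∀ c₁ c₂ : C, ent c₂ c₁ → ent (cr ρ c₂) (cr ρ c₁))
    (t₁ t₂ : Trace (Event Name) C) (h : TraceSim ent t₁ t₂) :
    TraceSim ent (traceRename cr ρ t₁) (traceRename cr ρ t₂) := by
  obtain ⟨β, hu, η, hmono, hsim, hcnd⟩ := h
  have hβ : (traceRename cr ρ β).length = β.length := List.length_map _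
  have ht : (traceRename cr ρ t₂).length = t₂.length := List.length_map _
  refine ⟨traceRename cr ρ β, unwraps_rename cr ρ hu,
    fun i => (η (i.cast hβ)).cast ht.symm, ?_, ?_, ?_⟩
  · intro i j hij
    simpa using hmono (show (i.cast hβ) < j.cast hβ from by simpa using hij)
  · intro i
    have := tokSim_rename cr ρ ent_rename (hsim (i.cast hβ))
    simp only [List.get_eq_getElem] at this ⊢
    simp only [traceRename, List.getElem_map]
    exact this
  · intro j hj
    obtain ⟨c, hc⟩ := hcnd (j.cast ht) (by
      intro i hi
      exact hj (i.cast hβ.symm) (by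
        apply Fin.ext
        simpa using congrArg Fin.val hi))
    refine ⟨cr ρ c, ?_⟩
    have hc' : t₂[(j : ℕ)] = condTok c := hc
    simp only [List.get_eq_getElem]
    simp [traceRename, List.get_eq_getElem, List.getElem_map, hc', tokRename, atomRename, condTok]

end SDPaper
end
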